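/- Let s, r ≥ 0 and t ∈ ℝ with t ≤ min(s, r) and s + r − t > 1/2. Then the convolution map is continuous as a map h^{−t} × h^s → h^{−r}, i.e., there is C > 0 such that ‖a*b‖_{h^{−r}} ≤ C‖a‖_{h^{−t}}‖b‖_{h^s} for all a ∈ h^{−t}, b ∈ h^s. -/

import Mathlib

/- STATEMENT 1 (Convolution lemma, part I(b)):
For s, r ≥ 0, t ≤ min(s,r), s + r − t > 1/2, the convolution map
is continuous as a map h^{−t} × h^s → h^{−r}:
‖a*b‖_{h^{−r}} ≤ C ‖a‖_{h^{−t}} ‖b‖_{h^s}. -/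

noncomputable section

def conv (a b : ℤ → ℂ) (k : ℤ) : ℂ := ∑' j : ℤ, a (k - j) * b j

def memh (s : ℝ) (a : ℤ → ℂ) : Prop :=
  Summable fun k : ℤ => ((1 + |k| : ℝ)) ^ (2 * s) * ‖a k‖ ^ 2

def hnorm (s : ℝ) (a : ℤ → ℂ) : ℝ :=
  (∑' k : ℤ, ((1 + |k| : ℝ)) ^ (2 * s) * ‖a k‖ ^ 2) ^ ((1 : ℝ) / 2)

open scoped ENNReal NNReal
open MeasureTheory

namespace ConvAux

/-- weight -/
def W (x : ℤ) (e : ℝ) : ℝ := (1 + |(x : ℝ)|) ^ e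

lemma one_le_base (x : ℤ) : (1 : ℝ) ≤ 1 + |(x : ℝ)| :=
  le_add_of_nonneg_right (abs_nonneg _)

lemma base_pos (x : ℤ) : (0 : ℝ) < 1 + |(x : ℝ)| :=
  lt_of_lt_of_le one_pos (one_le_base x)

lemma W_pos (x : ℤ) (e : ℝ) : 0 < W x e := Real.rpow_pos_of_pos (base_pos x) e

lemma W_nonneg (x : ℤ) (e : ℝ) : 0 ≤ W x e := (W_pos x e).le

lemma W_mul (x : ℤ) (e f : ℝ) : W x e * W x f = W x (e + f) :=
  (Real.rpow_add (base_pos x) e f).symm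

lemma W_zero (x : ℤ) : W x 0 = 1 := Real.rpow_zero _

lemma W_sq (x : ℤ) (e : ℝ) : W x e ^ 2 = W x (2 * e) := by
  rw [sq, W_mul, two_mul]

lemma W_le_one (x : ℤ) {e : ℝ} (he : e ≤ 0) : W x e ≤ 1 := by
  have := Real.rpow_le_rpow_of_nonpos one_pos (one_le_base x) he
  simpa [W, Real.one_rpow] using this

/-- core real inequality, helper case -/
lemma helper {t s r X Y Z : ℝ} (hY : 1 ≤ Y) (hZ : 1 ≤ Z)
    (hYZ : Y ≤ Z) (htr : t ≤ r) (hs : 0 ≤ s)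
    (h1 : X ≤ 2 * Z) (h2 : Z ≤ 2 * X) :
    X ^ t * Y ^ (-s) * Z ^ (-r) ≤ 2 ^ |t| * Y ^ (t - s - r) := by
  have hZ0 : (0 : ℝ) < Z := lt_of_lt_of_le one_pos hZ
  have hY0 : (0 : ℝ) < Y := lt_of_lt_of_le one_pos hY
  have hX0 : (0 : ℝ) < X := by nlinarith
  have key : X ^ t ≤ 2 ^ |t| * Z ^ t := by
    rcases le_or_gt 0 t with h | h
    · rw [abs_of_nonneg h]
      calc X ^ t ≤ (2 * Z) ^ t := Real.rpow_le_rpow hX0.le h1 h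
        _ = 2 ^ t * Z ^ t := Real.mul_rpow (by norm_num) hZ0.le
    · rw [abs_of_neg h]
      have hZ2 : Z / 2 ≤ X := by linarith
      calc X ^ t ≤ (Z / 2) ^ t :=
            Real.rpow_le_rpow_of_nonpos (by positivity) hZ2 h.le
        _ = Z ^ t / 2 ^ t := Real.div_rpow hZ0.le (by norm_num : (0:ℝ) ≤ 2) t
        _ = 2 ^ (-t) * Z ^ t := by
            rw [Real.rpow_neg (by norm_num)]; ring
  have hZr : Z ^ (t - r) ≤ Y ^ (t - r) :=
    Real.rpow_le_rpow_of_nonpos hY0 hYZ (by linarith)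
  have hYs : (0:ℝ) ≤ Y ^ (-s) := (Real.rpow_pos_of_pos hY0 _).le
  calc X ^ t * Y ^ (-s) * Z ^ (-r)
      ≤ (2 ^ |t| * Z ^ t) * Y ^ (-s) * Z ^ (-r) := by
        apply mul_le_mul_of_nonneg_right _ (Real.rpow_pos_of_pos hZ0 _).le
        exact mul_le_mul_of_nonneg_right key hYs
    _ = 2 ^ |t| * (Y ^ (-s) * (Z ^ t * Z ^ (-r))) := by ring
    _ = 2 ^ |t| * (Y ^ (-s) * Z ^ (t - r)) := by
        rw [← Real.rpow_add hZ0]; ring_nf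
    _ ≤ 2 ^ |t| * (Y ^ (-s) * Y ^ (t - r)) := by
        have h2t : (0:ℝ) ≤ 2 ^ |t| := by positivity
        apply mul_le_mul_of_nonneg_left _ h2t
        exact mul_le_mul_of_nonneg_left hZr hYs
    _ = 2 ^ |t| * Y ^ (t - s - r) := by
        rw [← Real.rpow_add hY0]; ring_nf

lemma one_le_two_rpow (t : ℝ) : (1:ℝ) ≤ 2 ^ |t| :=
  Real.one_le_rpow one_le_two (abs_nonneg t)

/-- core real inequality -/
lemma core {t s r X Y Z : ℝ} (hs : 0 ≤ s) (hr : 0 ≤ r) (hts : t ≤ s) (htr : t ≤ r)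
    (hX : 1 ≤ X) (hY : 1 ≤ Y) (hZ : 1 ≤ Z)
    (hZXY : Z ≤ X + Y) (hXZY : X ≤ Z + Y) (hYZX : Y ≤ Z + X) :
    X ^ t * Y ^ (-s) * Z ^ (-r)
      ≤ 2 ^ |t| * (X ^ (t - s - r) + Y ^ (t - s - r) + Z ^ (t - s - r)) := by
  have hX0 : (0:ℝ) < X := lt_of_lt_of_le one_pos hX
  have hY0 : (0:ℝ) < Y := lt_of_lt_of_le one_pos hY
  have hZ0 : (0:ℝ) < Z := lt_of_lt_of_le one_pos hZ
  have hXp : (0:ℝ) ≤ X ^ (t-s-r) := (Real.rpow_pos_of_pos hX0 _).le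
  have hYp : (0:ℝ) ≤ Y ^ (t-s-r) := (Real.rpow_pos_of_pos hY0 _).le
  have hZp : (0:ℝ) ≤ Z ^ (t-s-r) := (Real.rpow_pos_of_pos hZ0 _).le
  have h2t : (1:ℝ) ≤ 2 ^ |t| := one_le_two_rpow t
  rcases le_total X Y with hXY | hXY
  · rcases le_total X Z with hXZ | hXZ
    · -- X is min
      have hYs : Y ^ (-s) ≤ X ^ (-s) :=
        Real.rpow_le_rpow_of_nonpos hX0 hXY (neg_nonpos.mpr hs)
      have hZr : Z ^ (-r) ≤ X ^ (-r) :=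
        Real.rpow_le_rpow_of_nonpos hX0 hXZ (neg_nonpos.mpr hr)
      have hXt : (0:ℝ) ≤ X ^ t := (Real.rpow_pos_of_pos hX0 _).le
      have : X ^ t * Y ^ (-s) * Z ^ (-r) ≤ X ^ t * X ^ (-s) * X ^ (-r) := by
        apply mul_le_mul _ hZr (Real.rpow_pos_of_pos hZ0 _).le
          (by positivity)
        exact mul_le_mul_of_nonneg_left hYs hXt
      calc X ^ t * Y ^ (-s) * Z ^ (-r) ≤ X ^ t * X ^ (-s) * X ^ (-r) := this
        _ = X ^ (t - s - r) := by
            rw [← Real.rpow_add hX0, ← Real.rpow_add hX0]; ring_nf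
        _ ≤ 2 ^ |t| * (X ^ (t-s-r) + Y ^ (t-s-r) + Z ^ (t-s-r)) := by nlinarith
    · -- Z ≤ X ≤ Y : Z is min
      have h := helper (t := t) (s := r) (r := s) (X := X) (Y := Z) (Z := Y)
        hZ hY (hXZ.trans hXY) hts hr (by linarith) (by linarith)
      calc X ^ t * Y ^ (-s) * Z ^ (-r) = X ^ t * Z ^ (-r) * Y ^ (-s) := by ring
        _ ≤ 2 ^ |t| * Z ^ (t - r - s) := h
        _ ≤ 2 ^ |t| * (X ^ (t-s-r) + Y ^ (t-s-r) + Z ^ (t-s-r)) := by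
            rw [show t - r - s = t - s - r by ring]; nlinarith
  · rcases le_total Y Z with hYZ | hYZ
    · -- Y is min
      have h := helper (t := t) (s := s) (r := r) (X := X) (Y := Y) (Z := Z)
        hY hZ hYZ htr hs (by linarith) (by linarith)
      calc X ^ t * Y ^ (-s) * Z ^ (-r) ≤ 2 ^ |t| * Y ^ (t - s - r) := h
        _ ≤ 2 ^ |t| * (X ^ (t-s-r) + Y ^ (t-s-r) + Z ^ (t-s-r)) := by nlinarith
    · -- Z is min (Z ≤ Y ≤ X)
      have h := helper (t := t) (s := r) (r := s) (X := X) (Y := Z) (Z := Y)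
        hZ hY hYZ hts hr (by linarith) (by linarith)
      calc X ^ t * Y ^ (-s) * Z ^ (-r) = X ^ t * Z ^ (-r) * Y ^ (-s) := by ring
        _ ≤ 2 ^ |t| * Z ^ (t - r - s) := h
        _ ≤ 2 ^ |t| * (X ^ (t-s-r) + Y ^ (t-s-r) + Z ^ (t-s-r)) := by
            rw [show t - r - s = t - s - r by ring]; nlinarith


/-- weight form of core inequality -/
lemma core_w {t s r : ℝ} (hs : 0 ≤ s) (hr : 0 ≤ r) (hts : t ≤ s) (htr : t ≤ r)
    (k j : ℤ) :
    W (k - j) t * W j (-s) * W k (-r)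
      ≤ 2 ^ |t| * (W (k - j) (t - s - r) + W j (t - s - r) + W k (t - s - r)) := by
  apply core hs hr hts htr (one_le_base _) (one_le_base _) (one_le_base _)
  · have : |(k : ℝ)| ≤ |((k - j : ℤ) : ℝ)| + |(j : ℝ)| := by
      push_cast
      simpa using abs_add_le ((k : ℝ) - j) (j : ℝ)
    linarith
  · have : |((k - j : ℤ) : ℝ)| ≤ |(k : ℝ)| + |(j : ℝ)| := by
      push_cast; exact abs_sub _ _
    linarith
  · have : |(j : ℝ)| ≤ |(k : ℝ)| + |((k - j : ℤ) : ℝ)| := by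
      push_cast
      have := abs_sub (k : ℝ) ((k : ℝ) - j)
      simpa using this
    linarith

/-- summability of the weight -/
lemma summable_W {e : ℝ} (he : e < -1) :
    Summable fun k : ℤ => W k e := by
  have hnat : Summable fun n : ℕ => (1 + (n : ℝ)) ^ e := by
    have h0 : Summable fun n : ℕ => (n : ℝ) ^ e := Real.summable_nat_rpow.mpr he
    have h1 := (summable_nat_add_iff 1).mpr h0
    apply h1.congr
    intro n
    push_cast
    ring_nf
  apply Summable.of_nat_of_neg
  · apply hnat.congr; intro n; simp [W]
  · apply hnat.congr; intro n; simp [W]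


/-- Cauchy-Schwarz for ENNReal tsums -/
lemma cs (f g : ℤ → ℝ≥0∞) :
    ∑' k, f k * g k
      ≤ (∑' k, f k ^ (2:ℝ)) ^ ((1:ℝ)/2) * (∑' k, g k ^ (2:ℝ)) ^ ((1:ℝ)/2) := by
  have hconj : Real.HolderConjugate 2 2 := Real.HolderConjugate.two_two
  have h := ENNReal.lintegral_mul_le_Lp_mul_Lq (μ := (Measure.count : Measure ℤ))
    hconj (measurable_of_countable f).aemeasurable (measurable_of_countable g).aemeasurable
  simpa [MeasureTheory.lintegral_count] using h

lemma sq_le_of_le_sqrt {x A B : ℝ≥0∞}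
    (h : x ≤ A ^ ((1:ℝ)/2) * B ^ ((1:ℝ)/2)) : x ^ (2:ℝ) ≤ A * B := by
  have h2 := ENNReal.rpow_le_rpow h (by norm_num : (0:ℝ) ≤ 2)
  calc x ^ (2:ℝ) ≤ (A ^ ((1:ℝ)/2) * B ^ ((1:ℝ)/2)) ^ (2:ℝ) := h2
    _ = (A ^ ((1:ℝ)/2)) ^ (2:ℝ) * (B ^ ((1:ℝ)/2)) ^ (2:ℝ) :=
        ENNReal.mul_rpow_of_nonneg _ _ (by norm_num)
    _ = A * B := by
        rw [← ENNReal.rpow_mul, ← ENNReal.rpow_mul]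
        norm_num

lemma tsum_shift (f : ℤ → ℝ≥0∞) (k : ℤ) : ∑' j, f (k - j) = ∑' j, f j :=
  (Equiv.subLeft k).tsum_eq f

lemma tsum_shift' (f : ℤ → ℝ≥0∞) (j : ℤ) : ∑' k, f (k - j) = ∑' k, f k :=
  (Equiv.subRight j).tsum_eq f

/-- shifted Cauchy-Schwarz -/
lemma cs_shift (f g : ℤ → ℝ≥0∞) (k : ℤ) :
    ∑' j, f (k - j) * g j
      ≤ (∑' m, f m ^ (2:ℝ)) ^ ((1:ℝ)/2) * (∑' j, g j ^ (2:ℝ)) ^ ((1:ℝ)/2) := by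
  have h := cs (fun j => f (k - j)) g
  calc ∑' j, f (k - j) * g j
      ≤ (∑' j, f (k - j) ^ (2:ℝ)) ^ ((1:ℝ)/2) * (∑' j, g j ^ (2:ℝ)) ^ ((1:ℝ)/2) := h
    _ = (∑' m, f m ^ (2:ℝ)) ^ ((1:ℝ)/2) * (∑' j, g j ^ (2:ℝ)) ^ ((1:ℝ)/2) := by
        rw [tsum_shift (fun m => f m ^ (2:ℝ)) k]

/-- Young: ℓ¹ ⋆ ℓ² ⊆ ℓ² -/
lemma young (f g : ℤ → ℝ≥0∞) :
    ∑' k, (∑' j, f (k - j) * g j) ^ (2:ℝ)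
      ≤ (∑' m, f m) ^ (2:ℝ) * ∑' j, g j ^ (2:ℝ) := by
  have inner : ∀ k, (∑' j, f (k - j) * g j) ^ (2:ℝ)
      ≤ (∑' m, f m) * ∑' j, f (k - j) * g j ^ (2:ℝ) := by
    intro k
    apply sq_le_of_le_sqrt
    have h := cs (fun j => f (k - j) ^ ((1:ℝ)/2))
      (fun j => f (k - j) ^ ((1:ℝ)/2) * g j)
    have e1 : ∀ j, f (k - j) ^ ((1:ℝ)/2) * (f (k - j) ^ ((1:ℝ)/2) * g j)
        = f (k - j) * g j := by
      intro j
      rw [← mul_assoc, ← ENNReal.rpow_add_of_nonneg _ _ (by norm_num) (by norm_num)]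
      norm_num
    have e2 : ∀ j, (f (k - j) ^ ((1:ℝ)/2)) ^ (2:ℝ) = f (k - j) := by
      intro j; rw [← ENNReal.rpow_mul]; norm_num
    have e3 : ∀ j, (f (k - j) ^ ((1:ℝ)/2) * g j) ^ (2:ℝ)
        = f (k - j) * g j ^ (2:ℝ) := by
      intro j
      rw [ENNReal.mul_rpow_of_nonneg _ _ (by norm_num : (0:ℝ) ≤ 2), ← ENNReal.rpow_mul]
      norm_num
    simp only [e1, e2, e3] at h
    calc ∑' j, f (k - j) * g j
        ≤ (∑' j, f (k - j)) ^ ((1:ℝ)/2) * (∑' j, f (k - j) * g j ^ (2:ℝ)) ^ ((1:ℝ)/2) := h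
      _ = (∑' m, f m) ^ ((1:ℝ)/2) * (∑' j, f (k - j) * g j ^ (2:ℝ)) ^ ((1:ℝ)/2) := by
          rw [tsum_shift f k]
  calc ∑' k, (∑' j, f (k - j) * g j) ^ (2:ℝ)
      ≤ ∑' k, (∑' m, f m) * ∑' j, f (k - j) * g j ^ (2:ℝ) :=
        ENNReal.tsum_le_tsum inner
    _ = (∑' m, f m) * ∑' k, ∑' j, f (k - j) * g j ^ (2:ℝ) := ENNReal.tsum_mul_left
    _ = (∑' m, f m) * ∑' j, ∑' k, f (k - j) * g j ^ (2:ℝ) := by rw [ENNReal.tsum_comm]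
    _ = (∑' m, f m) * ∑' j, g j ^ (2:ℝ) * ∑' k, f (k - j) := by
        congr 1; apply tsum_congr; intro j
        rw [ENNReal.tsum_mul_right, mul_comm]
    _ = (∑' m, f m) * ∑' j, g j ^ (2:ℝ) * ∑' m, f m := by
        congr 1; apply tsum_congr; intro j
        rw [tsum_shift' f j]
    _ = (∑' m, f m) ^ (2:ℝ) * ∑' j, g j ^ (2:ℝ) := by
        rw [ENNReal.tsum_mul_right, show ((2:ℝ)) = ((2:ℕ):ℝ) by norm_num,
          ENNReal.rpow_natCast]
        ring

/-- (x+y+z)² ≤ 9(x²+y²+z²) in ℝ≥0∞ -/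
lemma sq_add_three (x y z : ℝ≥0∞) :
    (x + y + z) ^ (2:ℝ) ≤ 9 * (x ^ (2:ℝ) + y ^ (2:ℝ) + z ^ (2:ℝ)) := by
  set M := max x (max y z) with hM
  have hx : x ≤ M := le_max_left _ _
  have hy : y ≤ M := le_trans (le_max_left _ _) (le_max_right _ _)
  have hz : z ≤ M := le_trans (le_max_right _ _) (le_max_right _ _)
  have h1 : x + y + z ≤ 3 * M := by
    calc x + y + z ≤ M + M + M := by gcongr
      _ = 3 * M := by ring
  have hM2 : M ^ (2:ℝ) ≤ x ^ (2:ℝ) + y ^ (2:ℝ) + z ^ (2:ℝ) := by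
    rcases le_total x (max y z) with h | h
    · rcases le_total y z with h' | h'
      · have : M = z := by rw [hM, max_eq_right h, max_eq_right h']
        rw [this]; exact le_add_self
      · have : M = y := by rw [hM, max_eq_right h, max_eq_left h']
        rw [this]
        calc y ^ (2:ℝ) ≤ x ^ (2:ℝ) + y ^ (2:ℝ) := le_add_self
          _ ≤ _ := le_self_add
    · have : M = x := by rw [hM, max_eq_left h]
      rw [this]
      calc x ^ (2:ℝ) ≤ x ^ (2:ℝ) + y ^ (2:ℝ) := le_self_add
        _ ≤ _ := le_self_add
  calc (x + y + z) ^ (2:ℝ) ≤ (3 * M) ^ (2:ℝ) :=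
        ENNReal.rpow_le_rpow h1 (by norm_num)
    _ = 9 * M ^ (2:ℝ) := by
        rw [ENNReal.mul_rpow_of_nonneg _ _ (by norm_num : (0:ℝ) ≤ 2),
          show ((2:ℝ)) = ((2:ℕ):ℝ) by norm_num, ENNReal.rpow_natCast]
        norm_num
    _ ≤ 9 * (x ^ (2:ℝ) + y ^ (2:ℝ) + z ^ (2:ℝ)) := by gcongr

end ConvAux


open ConvAux in
theorem convolution_lemma_Ib (s r t : ℝ) (hs : 0 ≤ s) (hr : 0 ≤ r)
    (ht : t ≤ min s r) (hsrt : 1 / 2 < s + r - t) :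
    ∃ C > (0 : ℝ), ∀ a b : ℤ → ℂ, memh (-t) a → memh s b →
      memh (-r) (conv a b) ∧ hnorm (-r) (conv a b) ≤ C * hnorm (-t) a * hnorm s b := by
  have hts : t ≤ s := le_trans ht (min_le_left _ _)
  have htr : t ≤ r := le_trans ht (min_le_right _ _)
  have hσ : 2 * (t - s - r) < -1 := by linarith
  have hσ0 : t - s - r ≤ 0 := by linarith
  have hSUsum : Summable fun k : ℤ => W k (2 * (t - s - r)) := summable_W hσ
  set SU : ℝ := ∑' k : ℤ, W k (2 * (t - s - r)) with hSUdef
  have hSU1 : (1 : ℝ) ≤ SU := by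
    have h0 : W (0 : ℤ) (2 * (t - s - r)) ≤ SU :=
      Summable.le_tsum hSUsum 0 (fun i _ => W_nonneg i _)
    simpa [W, Real.one_rpow] using h0
  have hSUpos : (0 : ℝ) < SU := lt_of_lt_of_le one_pos hSU1
  have h2t : (0:ℝ) < 2 ^ |t| := Real.rpow_pos_of_pos two_pos _
  refine ⟨(27 * (2 ^ |t|) ^ 2 * SU) ^ ((1:ℝ)/2), Real.rpow_pos_of_pos (by positivity) _, ?_⟩
  intro a b ha hb
  -- ENNReal versions
  set A : ℤ → ℝ≥0∞ := fun m => ENNReal.ofReal (W m (-t) * ‖a m‖) with hAdef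
  set B : ℤ → ℝ≥0∞ := fun m => ENNReal.ofReal (W m s * ‖b m‖) with hBdef
  set u : ℤ → ℝ≥0∞ := fun m => ENNReal.ofReal (W m (t - s - r)) with hudef
  set c : ℝ≥0∞ := ENNReal.ofReal (2 ^ |t|) with hcdef
  have ofReal_sq : ∀ (y : ℝ), 0 ≤ y → (ENNReal.ofReal y) ^ (2:ℝ) = ENNReal.ofReal (y ^ 2) := by
    intro y hy
    rw [show ((2:ℝ)) = ((2:ℕ):ℝ) by norm_num, ENNReal.rpow_natCast,
      ENNReal.ofReal_pow hy]
  -- identification of the ℓ² sums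
  set Sa : ℝ := ∑' k : ℤ, ((1 + |k| : ℝ)) ^ (2 * -t) * ‖a k‖ ^ 2 with hSadef
  set Sb : ℝ := ∑' k : ℤ, ((1 + |k| : ℝ)) ^ (2 * s) * ‖b k‖ ^ 2 with hSbdef
  have hptA : ∀ m : ℤ, A m ^ (2:ℝ)
      = ENNReal.ofReal (((1 + |m| : ℝ)) ^ (2 * -t) * ‖a m‖ ^ 2) := by
    intro m
    rw [hAdef, ofReal_sq _ (mul_nonneg (W_nonneg _ _) (norm_nonneg _)),
      mul_pow, W_sq]
    simp only [Int.cast_abs]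
    rfl
  have hptB : ∀ m : ℤ, B m ^ (2:ℝ)
      = ENNReal.ofReal (((1 + |m| : ℝ)) ^ (2 * s) * ‖b m‖ ^ 2) := by
    intro m
    rw [hBdef, ofReal_sq _ (mul_nonneg (W_nonneg _ _) (norm_nonneg _)),
      mul_pow, W_sq]
    simp only [Int.cast_abs]
    rfl
  have hptu : ∀ m : ℤ, u m ^ (2:ℝ) = ENNReal.ofReal (W m (2 * (t - s - r))) := by
    intro m
    rw [hudef, ofReal_sq _ (W_nonneg _ _), W_sq]
  have hSA : (∑' m : ℤ, A m ^ (2:ℝ)) = ENNReal.ofReal Sa := by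
    rw [hSadef, ENNReal.ofReal_tsum_of_nonneg (fun k => by positivity) ha]
    exact tsum_congr hptA
  have hSB : (∑' m : ℤ, B m ^ (2:ℝ)) = ENNReal.ofReal Sb := by
    rw [hSbdef, ENNReal.ofReal_tsum_of_nonneg (fun k => by positivity) hb]
    exact tsum_congr hptB
  have hU : (∑' m : ℤ, u m ^ (2:ℝ)) = ENNReal.ofReal SU := by
    rw [hSUdef, ENNReal.ofReal_tsum_of_nonneg (fun k => W_nonneg _ _) hSUsum]
    exact tsum_congr hptu
  have hSAne : (∑' m : ℤ, A m ^ (2:ℝ)) ≠ ⊤ := by rw [hSA]; exact ENNReal.ofReal_ne_top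
  have hSBne : (∑' m : ℤ, B m ^ (2:ℝ)) ≠ ⊤ := by rw [hSB]; exact ENNReal.ofReal_ne_top
  -- the key pointwise estimate
  set N : ℤ → ℝ≥0∞ := fun k => ∑' j, ENNReal.ofReal ‖a (k - j)‖ * ENNReal.ofReal ‖b j‖
    with hNdef
  set T1 : ℤ → ℝ≥0∞ := fun k => ∑' j, (u (k - j) * A (k - j)) * B j with hT1def
  set T2 : ℤ → ℝ≥0∞ := fun k => ∑' j, (u (k - j) * B (k - j)) * A j with hT2def
  set T3 : ℤ → ℝ≥0∞ := fun k => u k * ∑' j, A (k - j) * B j with hT3def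
  have key : ∀ k : ℤ, ENNReal.ofReal (W k (-r)) * N k ≤ c * (T1 k + T2 k + T3 k) := by
    intro k
    have hpt : ∀ j : ℤ, ENNReal.ofReal (W k (-r)) *
        (ENNReal.ofReal ‖a (k - j)‖ * ENNReal.ofReal ‖b j‖)
        ≤ c * (((u (k - j) * A (k - j)) * B j + A (k - j) * (u j * B j)
            + u k * (A (k - j) * B j))) := by
      intro j
      have hreal : W k (-r) * (‖a (k - j)‖ * ‖b j‖)
          = (W (k - j) t * W j (-s) * W k (-r))
            * ((W (k - j) (-t) * ‖a (k - j)‖) * (W j s * ‖b j‖)) := by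
        have h1 : W (k - j) t * W (k - j) (-t) = 1 := by
          rw [W_mul, add_neg_cancel, W_zero]
        have h2 : W j (-s) * W j s = 1 := by
          rw [W_mul, neg_add_cancel, W_zero]
        calc W k (-r) * (‖a (k - j)‖ * ‖b j‖)
            = 1 * 1 * (W k (-r) * (‖a (k - j)‖ * ‖b j‖)) := by ring
          _ = (W (k - j) t * W (k - j) (-t)) * (W j (-s) * W j s)
              * (W k (-r) * (‖a (k - j)‖ * ‖b j‖)) := by rw [h1, h2]
          _ = _ := by ring
      calc ENNReal.ofReal (W k (-r)) *
            (ENNReal.ofReal ‖a (k - j)‖ * ENNReal.ofReal ‖b j‖)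
          = ENNReal.ofReal (W k (-r) * (‖a (k - j)‖ * ‖b j‖)) := by
            rw [← ENNReal.ofReal_mul (norm_nonneg _), ← ENNReal.ofReal_mul (W_nonneg _ _)]
        _ = ENNReal.ofReal ((W (k - j) t * W j (-s) * W k (-r))
              * ((W (k - j) (-t) * ‖a (k - j)‖) * (W j s * ‖b j‖))) := by rw [hreal]
        _ ≤ ENNReal.ofReal ((2 ^ |t| * (W (k - j) (t - s - r) + W j (t - s - r)
              + W k (t - s - r)))
              * ((W (k - j) (-t) * ‖a (k - j)‖) * (W j s * ‖b j‖))) := by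
            apply ENNReal.ofReal_le_ofReal
            apply mul_le_mul_of_nonneg_right (core_w hs hr hts htr k j)
            have := W_nonneg (k - j) (-t); have := W_nonneg j s
            have := norm_nonneg (a (k - j)); have := norm_nonneg (b j)
            positivity
        _ = c * ((u (k - j) + u j + u k) * (A (k - j) * B j)) := by
            have hQ1 := W_nonneg (k - j) (t - s - r)
            have hQ2 := W_nonneg j (t - s - r)
            have hQ3 := W_nonneg k (t - s - r)
            have hQ : (0:ℝ) ≤ W (k - j) (t - s - r) + W j (t - s - r) + W k (t - s - r) :=
              add_nonneg (add_nonneg hQ1 hQ2) hQ3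
            have hR : (0:ℝ) ≤ W (k - j) (-t) * ‖a (k - j)‖ :=
              mul_nonneg (W_nonneg _ _) (norm_nonneg _)
            rw [hcdef, hudef, hAdef, hBdef]
            rw [ENNReal.ofReal_mul (mul_nonneg h2t.le hQ),
              ENNReal.ofReal_mul h2t.le,
              ENNReal.ofReal_add (add_nonneg hQ1 hQ2) hQ3,
              ENNReal.ofReal_add hQ1 hQ2,
              ENNReal.ofReal_mul hR]
            ring
        _ = c * (((u (k - j) * A (k - j)) * B j + A (k - j) * (u j * B j)
              + u k * (A (k - j) * B j))) := by ring
    have hmid : (∑' j, A (k - j) * (u j * B j)) = ∑' j, (u (k - j) * B (k - j)) * A j := by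
      rw [← (Equiv.subLeft k).tsum_eq (fun j => A (k - j) * (u j * B j))]
      apply tsum_congr; intro j
      simp only [Equiv.subLeft_apply, sub_sub_cancel]
      ring
    calc ENNReal.ofReal (W k (-r)) * N k
        = ∑' j, ENNReal.ofReal (W k (-r)) *
            (ENNReal.ofReal ‖a (k - j)‖ * ENNReal.ofReal ‖b j‖) := by
          rw [hNdef, ENNReal.tsum_mul_left]
      _ ≤ ∑' j, c * (((u (k - j) * A (k - j)) * B j + A (k - j) * (u j * B j)
            + u k * (A (k - j) * B j))) := ENNReal.tsum_le_tsum hpt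
      _ = c * ((∑' j, (u (k - j) * A (k - j)) * B j)
            + (∑' j, A (k - j) * (u j * B j)) + u k * ∑' j, A (k - j) * B j) := by
          rw [ENNReal.tsum_mul_left, ENNReal.tsum_add, ENNReal.tsum_add,
            ENNReal.tsum_mul_left]
      _ = c * (T1 k + T2 k + T3 k) := by rw [hmid, hT1def, hT2def, hT3def]
  -- finiteness ingredients
  have hu1 : ∀ m : ℤ, u m ≤ 1 := by
    intro m
    rw [hudef]
    exact ENNReal.ofReal_le_one.mpr (W_le_one m hσ0)
  have hSAh : (∑' m : ℤ, A m ^ (2:ℝ)) ^ ((1:ℝ)/2) ≠ ⊤ :=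
    ENNReal.rpow_ne_top_of_nonneg (by norm_num) hSAne
  have hSBh : (∑' m : ℤ, B m ^ (2:ℝ)) ^ ((1:ℝ)/2) ≠ ⊤ :=
    ENNReal.rpow_ne_top_of_nonneg (by norm_num) hSBne
  have hMne : ((∑' m : ℤ, A m ^ (2:ℝ)) ^ ((1:ℝ)/2)
      * (∑' m : ℤ, B m ^ (2:ℝ)) ^ ((1:ℝ)/2)) ≠ ⊤ := ENNReal.mul_ne_top hSAh hSBh
  have huAsq : (∑' m : ℤ, (u m * A m) ^ (2:ℝ)) ≤ ∑' m : ℤ, A m ^ (2:ℝ) := by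
    apply ENNReal.tsum_le_tsum
    intro m
    apply ENNReal.rpow_le_rpow _ (by norm_num)
    calc u m * A m ≤ 1 * A m := mul_le_mul_left (hu1 m) _
      _ = A m := one_mul _
  have huBsq : (∑' m : ℤ, (u m * B m) ^ (2:ℝ)) ≤ ∑' m : ℤ, B m ^ (2:ℝ) := by
    apply ENNReal.tsum_le_tsum
    intro m
    apply ENNReal.rpow_le_rpow _ (by norm_num)
    calc u m * B m ≤ 1 * B m := mul_le_mul_left (hu1 m) _
      _ = B m := one_mul _
  have hT1fin : ∀ k, T1 k ≠ ⊤ := by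
    intro k
    have h1 : T1 k ≤ (∑' m : ℤ, (u m * A m) ^ (2:ℝ)) ^ ((1:ℝ)/2)
        * (∑' m : ℤ, B m ^ (2:ℝ)) ^ ((1:ℝ)/2) := cs_shift (fun m => u m * A m) B k
    have h2 : (∑' m : ℤ, (u m * A m) ^ (2:ℝ)) ^ ((1:ℝ)/2)
        ≤ (∑' m : ℤ, A m ^ (2:ℝ)) ^ ((1:ℝ)/2) := ENNReal.rpow_le_rpow huAsq (by norm_num)
    exact ne_top_of_le_ne_top hMne (h1.trans (mul_le_mul_left h2 _))
  have hT2fin : ∀ k, T2 k ≠ ⊤ := by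
    intro k
    have h1 : T2 k ≤ (∑' m : ℤ, (u m * B m) ^ (2:ℝ)) ^ ((1:ℝ)/2)
        * (∑' m : ℤ, A m ^ (2:ℝ)) ^ ((1:ℝ)/2) := cs_shift (fun m => u m * B m) A k
    have h2 : (∑' m : ℤ, (u m * B m) ^ (2:ℝ)) ^ ((1:ℝ)/2)
        ≤ (∑' m : ℤ, B m ^ (2:ℝ)) ^ ((1:ℝ)/2) := ENNReal.rpow_le_rpow huBsq (by norm_num)
    apply ne_top_of_le_ne_top (ENNReal.mul_ne_top hSBh hSAh)
    exact h1.trans (mul_le_mul_left h2 _)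
  have hT3fin : ∀ k, T3 k ≠ ⊤ := by
    intro k
    have h1 : T3 k ≤ 1 * ((∑' m : ℤ, A m ^ (2:ℝ)) ^ ((1:ℝ)/2)
        * (∑' m : ℤ, B m ^ (2:ℝ)) ^ ((1:ℝ)/2)) := mul_le_mul' (hu1 k) (cs_shift A B k)
    rw [one_mul] at h1
    exact ne_top_of_le_ne_top hMne h1
  -- N k is finite and dominates the convolution
  have hNfin : ∀ k, N k ≠ ⊤ := by
    intro k hN
    have hw0 : ENNReal.ofReal (W k (-r)) ≠ 0 := by
      simp only [ne_eq, ENNReal.ofReal_eq_zero, not_le]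
      exact W_pos k (-r)
    have hkey := key k
    rw [hN, ENNReal.mul_top hw0] at hkey
    have hfin : c * (T1 k + T2 k + T3 k) ≠ ⊤ := by
      apply ENNReal.mul_ne_top ENNReal.ofReal_ne_top
      simp only [ne_eq, ENNReal.add_eq_top, not_or]
      exact ⟨⟨hT1fin k, hT2fin k⟩, hT3fin k⟩
    exact hfin (top_le_iff.mp hkey)
  have hNge : ∀ k, ENNReal.ofReal ‖conv a b k‖ ≤ N k := by
    intro k
    have hF : (∑' j, ENNReal.ofReal ‖a (k - j)‖ * ENNReal.ofReal ‖b j‖) ≠ ⊤ := hNfin k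
    have h1 := ENNReal.summable_toReal hF
    have h2 : Summable fun j => ‖a (k - j)‖ * ‖b j‖ := by
      apply h1.congr
      intro j
      rw [ENNReal.toReal_mul, ENNReal.toReal_ofReal (norm_nonneg _),
        ENNReal.toReal_ofReal (norm_nonneg _)]
    have h3 : Summable fun j => ‖a (k - j) * b j‖ := by
      apply h2.congr; intro j; rw [norm_mul]
    have h4 : ‖conv a b k‖ ≤ ∑' j, ‖a (k - j) * b j‖ := norm_tsum_le_tsum_norm h3
    calc ENNReal.ofReal ‖conv a b k‖ ≤ ENNReal.ofReal (∑' j, ‖a (k - j) * b j‖) :=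
          ENNReal.ofReal_le_ofReal h4
      _ = ∑' j, ENNReal.ofReal ‖a (k - j) * b j‖ :=
          ENNReal.ofReal_tsum_of_nonneg (fun j => norm_nonneg _) h3
      _ = N k := by
          rw [hNdef]
          apply tsum_congr; intro j
          rw [norm_mul, ENNReal.ofReal_mul (norm_nonneg _)]
  -- the square-sum bounds
  have hT1sum : (∑' k, T1 k ^ (2:ℝ))
      ≤ (∑' m : ℤ, u m ^ (2:ℝ)) * (∑' m : ℤ, A m ^ (2:ℝ)) * ∑' m : ℤ, B m ^ (2:ℝ) := by
    calc ∑' k, T1 k ^ (2:ℝ)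
        ≤ (∑' m : ℤ, u m * A m) ^ (2:ℝ) * ∑' m : ℤ, B m ^ (2:ℝ) :=
          young (fun m => u m * A m) B
      _ ≤ ((∑' m : ℤ, u m ^ (2:ℝ)) * (∑' m : ℤ, A m ^ (2:ℝ))) * ∑' m : ℤ, B m ^ (2:ℝ) :=
          mul_le_mul_left (sq_le_of_le_sqrt (cs u A)) _
      _ = _ := by ring
  have hT2sum : (∑' k, T2 k ^ (2:ℝ))
      ≤ (∑' m : ℤ, u m ^ (2:ℝ)) * (∑' m : ℤ, A m ^ (2:ℝ)) * ∑' m : ℤ, B m ^ (2:ℝ) := by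
    calc ∑' k, T2 k ^ (2:ℝ)
        ≤ (∑' m : ℤ, u m * B m) ^ (2:ℝ) * ∑' m : ℤ, A m ^ (2:ℝ) :=
          young (fun m => u m * B m) A
      _ ≤ ((∑' m : ℤ, u m ^ (2:ℝ)) * (∑' m : ℤ, B m ^ (2:ℝ))) * ∑' m : ℤ, A m ^ (2:ℝ) :=
          mul_le_mul_left (sq_le_of_le_sqrt (cs u B)) _
      _ = _ := by ring
  have hT3sum : (∑' k, T3 k ^ (2:ℝ))
      ≤ (∑' m : ℤ, u m ^ (2:ℝ)) * (∑' m : ℤ, A m ^ (2:ℝ)) * ∑' m : ℤ, B m ^ (2:ℝ) := by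
    have hpt3 : ∀ k, T3 k ^ (2:ℝ)
        ≤ u k ^ (2:ℝ) * ((∑' m : ℤ, A m ^ (2:ℝ)) * ∑' m : ℤ, B m ^ (2:ℝ)) := by
      intro k
      rw [hT3def]
      calc (u k * ∑' j, A (k - j) * B j) ^ (2:ℝ)
          = u k ^ (2:ℝ) * (∑' j, A (k - j) * B j) ^ (2:ℝ) :=
            ENNReal.mul_rpow_of_nonneg _ _ (by norm_num)
        _ ≤ u k ^ (2:ℝ) * ((∑' m : ℤ, A m ^ (2:ℝ)) * ∑' m : ℤ, B m ^ (2:ℝ)) :=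
            mul_le_mul_right (sq_le_of_le_sqrt (cs_shift A B k)) _
    calc ∑' k, T3 k ^ (2:ℝ)
        ≤ ∑' k, u k ^ (2:ℝ) * ((∑' m : ℤ, A m ^ (2:ℝ)) * ∑' m : ℤ, B m ^ (2:ℝ)) :=
          ENNReal.tsum_le_tsum hpt3
      _ = (∑' m : ℤ, u m ^ (2:ℝ)) * ((∑' m : ℤ, A m ^ (2:ℝ)) * ∑' m : ℤ, B m ^ (2:ℝ)) :=
          ENNReal.tsum_mul_right
      _ = _ := by ring
  have hSa0 : (0:ℝ) ≤ Sa := by rw [hSadef]; exact tsum_nonneg (fun k => by positivity)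
  have hSb0 : (0:ℝ) ≤ Sb := by rw [hSbdef]; exact tsum_nonneg (fun k => by positivity)
  -- main summed estimate
  have hSconv : (∑' k, (ENNReal.ofReal (W k (-r)) * N k) ^ (2:ℝ))
      ≤ ENNReal.ofReal ((27 * (2 ^ |t|) ^ 2 * SU) * (Sa * Sb)) := by
    have hconvle : ∀ k, (ENNReal.ofReal (W k (-r)) * N k) ^ (2:ℝ)
        ≤ c ^ (2:ℝ) * (9 * (T1 k ^ (2:ℝ) + T2 k ^ (2:ℝ) + T3 k ^ (2:ℝ))) := by
      intro k
      calc (ENNReal.ofReal (W k (-r)) * N k) ^ (2:ℝ)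
          ≤ (c * (T1 k + T2 k + T3 k)) ^ (2:ℝ) :=
            ENNReal.rpow_le_rpow (key k) (by norm_num)
        _ = c ^ (2:ℝ) * (T1 k + T2 k + T3 k) ^ (2:ℝ) :=
            ENNReal.mul_rpow_of_nonneg _ _ (by norm_num)
        _ ≤ c ^ (2:ℝ) * (9 * (T1 k ^ (2:ℝ) + T2 k ^ (2:ℝ) + T3 k ^ (2:ℝ))) :=
            mul_le_mul_right (sq_add_three _ _ _) _
    have hsum3 : (∑' k, T1 k ^ (2:ℝ)) + (∑' k, T2 k ^ (2:ℝ)) + (∑' k, T3 k ^ (2:ℝ))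
        ≤ 3 * ((∑' m : ℤ, u m ^ (2:ℝ)) * (∑' m : ℤ, A m ^ (2:ℝ)) * ∑' m : ℤ, B m ^ (2:ℝ)) := by
      have := add_le_add (add_le_add hT1sum hT2sum) hT3sum
      calc (∑' k, T1 k ^ (2:ℝ)) + (∑' k, T2 k ^ (2:ℝ)) + (∑' k, T3 k ^ (2:ℝ))
          ≤ _ + _ + _ := this
        _ = 3 * ((∑' m : ℤ, u m ^ (2:ℝ)) * (∑' m : ℤ, A m ^ (2:ℝ)) * ∑' m : ℤ, B m ^ (2:ℝ)) := by
            ring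
    calc ∑' k, (ENNReal.ofReal (W k (-r)) * N k) ^ (2:ℝ)
        ≤ ∑' k, c ^ (2:ℝ) * (9 * (T1 k ^ (2:ℝ) + T2 k ^ (2:ℝ) + T3 k ^ (2:ℝ))) :=
          ENNReal.tsum_le_tsum hconvle
      _ = c ^ (2:ℝ) * (9 * ((∑' k, T1 k ^ (2:ℝ)) + (∑' k, T2 k ^ (2:ℝ))
            + (∑' k, T3 k ^ (2:ℝ)))) := by
          rw [ENNReal.tsum_mul_left, ENNReal.tsum_mul_left, ENNReal.tsum_add,
            ENNReal.tsum_add]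
      _ ≤ c ^ (2:ℝ) * (9 * (3 * ((∑' m : ℤ, u m ^ (2:ℝ)) * (∑' m : ℤ, A m ^ (2:ℝ))
            * ∑' m : ℤ, B m ^ (2:ℝ)))) := by
          exact mul_le_mul_right (mul_le_mul_right hsum3 _) _
      _ = ENNReal.ofReal ((27 * (2 ^ |t|) ^ 2 * SU) * (Sa * Sb)) := by
          rw [hU, hSA, hSB, hcdef, ofReal_sq _ h2t.le]
          rw [show (9 : ℝ≥0∞) = ENNReal.ofReal 9 by norm_num,
            show (3 : ℝ≥0∞) = ENNReal.ofReal 3 by norm_num]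
          rw [← ENNReal.ofReal_mul hSUpos.le,
            ← ENNReal.ofReal_mul (mul_nonneg hSUpos.le hSa0),
            ← ENNReal.ofReal_mul (by norm_num : (0:ℝ) ≤ 3),
            ← ENNReal.ofReal_mul (by norm_num : (0:ℝ) ≤ 9),
            ← ENNReal.ofReal_mul (by positivity : (0:ℝ) ≤ (2 ^ |t|) ^ 2)]
          congr 1
          ring
  -- conclusion
  have hconvterm : ∀ k : ℤ, ENNReal.ofReal (((1 + |k| : ℝ)) ^ (2 * -r) * ‖conv a b k‖ ^ 2)
      ≤ (ENNReal.ofReal (W k (-r)) * N k) ^ (2:ℝ) := by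
    intro k
    have he : ((1 + |k| : ℝ)) ^ (2 * -r) * ‖conv a b k‖ ^ 2
        = (W k (-r) * ‖conv a b k‖) ^ 2 := by
      rw [mul_pow, W_sq]
      simp only [W, Int.cast_abs]
    rw [he, ← ofReal_sq _ (mul_nonneg (W_nonneg _ _) (norm_nonneg _)),
      ENNReal.ofReal_mul (W_nonneg _ _)]
    exact ENNReal.rpow_le_rpow (mul_le_mul_right (hNge k) _) (by norm_num)
  have hsum_ofReal : (∑' k : ℤ, ENNReal.ofReal (((1 + |k| : ℝ)) ^ (2 * -r) * ‖conv a b k‖ ^ 2))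
      ≤ ENNReal.ofReal ((27 * (2 ^ |t|) ^ 2 * SU) * (Sa * Sb)) :=
    (ENNReal.tsum_le_tsum hconvterm).trans hSconv
  have hne : (∑' k : ℤ, ENNReal.ofReal (((1 + |k| : ℝ)) ^ (2 * -r) * ‖conv a b k‖ ^ 2)) ≠ ⊤ :=
    ne_top_of_le_ne_top ENNReal.ofReal_ne_top hsum_ofReal
  have hmemconv : memh (-r) (conv a b) := by
    have h1 := ENNReal.summable_toReal hne
    apply h1.congr
    intro k
    exact ENNReal.toReal_ofReal (by positivity)
  refine ⟨hmemconv, ?_⟩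
  have hreal_sum : (∑' k : ℤ, ((1 + |k| : ℝ)) ^ (2 * -r) * ‖conv a b k‖ ^ 2)
      ≤ (27 * (2 ^ |t|) ^ 2 * SU) * (Sa * Sb) := by
    have heq := ENNReal.ofReal_tsum_of_nonneg
      (f := fun k : ℤ => ((1 + |k| : ℝ)) ^ (2 * -r) * ‖conv a b k‖ ^ 2)
      (fun k => by positivity) hmemconv
    rw [← heq] at hsum_ofReal
    exact (ENNReal.ofReal_le_ofReal_iff
      (by positivity)).mp hsum_ofReal
  calc hnorm (-r) (conv a b)
      = (∑' k : ℤ, ((1 + |k| : ℝ)) ^ (2 * -r) * ‖conv a b k‖ ^ 2) ^ ((1:ℝ)/2) := rfl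
    _ ≤ ((27 * (2 ^ |t|) ^ 2 * SU) * (Sa * Sb)) ^ ((1:ℝ)/2) :=
        Real.rpow_le_rpow (tsum_nonneg (fun k => by positivity)) hreal_sum (by norm_num)
    _ = (27 * (2 ^ |t|) ^ 2 * SU) ^ ((1:ℝ)/2) * (Sa ^ ((1:ℝ)/2) * Sb ^ ((1:ℝ)/2)) := by
        rw [Real.mul_rpow (by positivity) (mul_nonneg hSa0 hSb0),
          Real.mul_rpow hSa0 hSb0]
    _ = (27 * (2 ^ |t|) ^ 2 * SU) ^ ((1:ℝ)/2) * hnorm (-t) a * hnorm s b := by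
        show _ = _ * (∑' k : ℤ, ((1 + |k| : ℝ)) ^ (2 * -t) * ‖a k‖ ^ 2) ^ ((1:ℝ)/2)
          * (∑' k : ℤ, ((1 + |k| : ℝ)) ^ (2 * s) * ‖b k‖ ^ 2) ^ ((1:ℝ)/2)
        rw [← hSadef, ← hSbdef]
        ring
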